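/- Let p_r : ℕ → [0,1] for r = 1,...,K be sequences such that lim_{N→∞} (1/N) Σ_{j=1}^N p_r(j) p_s(j) = m_{r,s} for all r,s, and let M_r(N) be sequences of positive integers with M_r(N)/M(N) → c_r > 0 where M(N) = Σ_r M_r(N). Let σ_1(N) ≥ ... ≥ σ_K(N) be the K largest singular values of the M(N)×N matrix Σ_{k=1}^K E_k P_k', where P_k = (p_k(1),...,p_k(N))' and E_k is the indicator of the k-th block of M_k(N) rows. Then for each 1 ≤ j ≤ K, σ_j(N)²/(N·M(N)) converges to λ_j, the j-th largest eigenvalue of the K×K matrix Q with entries Q_{r,s} = √(c_r c_s) m_{r,s}. -/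

import Mathlib

open Matrix Filter

/-- The eigenvalues of a Hermitian matrix, listed with multiplicity in decreasing order. -/
noncomputable def sortedEigs {n : ℕ} (A : Matrix (Fin n) (Fin n) ℝ) : Fin n → ℝ :=
  fun i => if hA : A.IsHermitian then hA.eigenvalues (Tuple.sort hA.eigenvalues i.rev) else 0

/-- The `j`-th largest eigenvalue (0-indexed), with the convention `0` when `j` is out of
range. -/
noncomputable def nthEig {n : ℕ} (A : Matrix (Fin n) (Fin n) ℝ) (j : ℕ) : ℝ :=
  if h : j < n then sortedEigs A ⟨j, h⟩ else 0

namespace SVH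

variable {n : ℕ}

lemma sortedEigs_eq {A : Matrix (Fin n) (Fin n) ℝ} (hA : A.IsHermitian) (i : Fin n) :
    sortedEigs A i = hA.eigenvalues (Tuple.sort hA.eigenvalues i.rev) := by
  rw [sortedEigs, dif_pos hA]

lemma sortedEigs_antitone {A : Matrix (Fin n) (Fin n) ℝ} (hA : A.IsHermitian) :
    Antitone (sortedEigs A) := by
  intro i k hik
  rw [sortedEigs_eq hA, sortedEigs_eq hA]
  exact Tuple.monotone_sort hA.eigenvalues (Fin.rev_le_rev.2 hik)

lemma sum_smul_dot {ι : Type*} [Fintype ι] (a : ι → ℝ) (v : ι → Fin n → ℝ) (w : Fin n → ℝ) :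
    (∑ k, a k • v k) ⬝ᵥ w = ∑ k, a k * (v k ⬝ᵥ w) := by
  simp only [dotProduct, Finset.sum_apply, Pi.smul_apply, smul_eq_mul, Finset.sum_mul,
    Finset.mul_sum, mul_assoc]
  exact Finset.sum_comm

lemma dot_sum_smul {ι : Type*} [Fintype ι] (a : ι → ℝ) (v : ι → Fin n → ℝ) (w : Fin n → ℝ) :
    w ⬝ᵥ (∑ k, a k • v k) = ∑ k, a k * (w ⬝ᵥ v k) := by
  rw [dotProduct_comm, sum_smul_dot]
  exact Finset.sum_congr rfl fun k _ => by rw [dotProduct_comm]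

/-- orthonormal family in dot-product form -/
def ONFam {ι : Type*} [DecidableEq ι] (v : ι → Fin n → ℝ) : Prop :=
  ∀ k l, v k ⬝ᵥ v l = if k = l then (1:ℝ) else 0

lemma ONFam.comp {ι κ : Type*} [DecidableEq ι] [DecidableEq κ] {v : ι → Fin n → ℝ}
    (hv : ONFam v) {f : κ → ι} (hf : Function.Injective f) : ONFam (v ∘ f) := by
  intro k l
  simp only [Function.comp_apply, hv (f k) (f l)]
  simp [hf.eq_iff]

lemma dot_expand {ι : Type*} [Fintype ι] [DecidableEq ι] {v : ι → Fin n → ℝ}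
    (hv : ONFam v) (a b : ι → ℝ) :
    (∑ k, a k • v k) ⬝ᵥ (∑ l, b l • v l) = ∑ k, a k * b k := by
  rw [sum_smul_dot]
  have : ∀ k, a k * (v k ⬝ᵥ ∑ l, b l • v l) = a k * b k := by
    intro k
    rw [dot_sum_smul]
    congr 1
    simp only [hv k, mul_ite, mul_one, mul_zero, Finset.sum_ite_eq, Finset.mem_univ, if_true]
  simp only [this]

lemma ONFam.linearIndependent {ι : Type*} [Fintype ι] [DecidableEq ι]
    {v : ι → Fin n → ℝ} (hv : ONFam v) : LinearIndependent ℝ v := by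
  rw [Fintype.linearIndependent_iff]
  intro g hg l
  have h0 : (∑ i, g i • v i) ⬝ᵥ v l = 0 := by rw [hg]; exact zero_dotProduct _
  rw [sum_smul_dot] at h0
  simp only [fun i => hv i l, mul_ite, mul_one, mul_zero, Finset.sum_ite_eq', Finset.mem_univ,
    if_true] at h0
  exact h0

end SVH

namespace SVH

variable {n : ℕ}

lemma rayleigh_ge {ι : Type*} [Fintype ι] [DecidableEq ι] {v : ι → Fin n → ℝ} (hv : ONFam v)
    {A : Matrix (Fin n) (Fin n) ℝ} {μ : ι → ℝ} (hAv : ∀ k, A *ᵥ v k = μ k • v k)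
    {t : ℝ} (ht : ∀ k, t ≤ μ k) :
    ∀ x ∈ Submodule.span ℝ (Set.range v), t * (x ⬝ᵥ x) ≤ x ⬝ᵥ (A *ᵥ x) := by
  intro x hx
  obtain ⟨a, rfl⟩ := (Submodule.mem_span_range_iff_exists_fun ℝ).mp hx
  have hAx : A *ᵥ (∑ k, a k • v k) = ∑ k, (a k * μ k) • v k := by
    rw [show A *ᵥ (∑ k, a k • v k) = A.mulVecLin (∑ k, a k • v k) from rfl]
    rw [map_sum]
    refine Finset.sum_congr rfl fun k _ => ?_
    simp [Matrix.mulVecLin_apply, Matrix.mulVec_smul, hAv k, smul_smul, mul_comm]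
  rw [hAx, dot_expand hv, dot_expand hv, Finset.mul_sum]
  refine Finset.sum_le_sum fun k _ => ?_
  have h1 : t * (a k * a k) ≤ μ k * (a k * a k) :=
    mul_le_mul_of_nonneg_right (ht k) (mul_self_nonneg _)
  nlinarith [h1]

lemma rayleigh_lt {ι : Type*} [Fintype ι] [DecidableEq ι] {v : ι → Fin n → ℝ} (hv : ONFam v)
    {A : Matrix (Fin n) (Fin n) ℝ} {μ : ι → ℝ} (hAv : ∀ k, A *ᵥ v k = μ k • v k)
    {t : ℝ} (ht : ∀ k, μ k < t) :
    ∀ x ∈ Submodule.span ℝ (Set.range v), x ≠ 0 → x ⬝ᵥ (A *ᵥ x) < t * (x ⬝ᵥ x) := by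
  intro x hx hx0
  obtain ⟨a, rfl⟩ := (Submodule.mem_span_range_iff_exists_fun ℝ).mp hx
  have hAx : A *ᵥ (∑ k, a k • v k) = ∑ k, (a k * μ k) • v k := by
    rw [show A *ᵥ (∑ k, a k • v k) = A.mulVecLin (∑ k, a k • v k) from rfl]
    rw [map_sum]
    refine Finset.sum_congr rfl fun k _ => ?_
    simp [Matrix.mulVecLin_apply, Matrix.mulVec_smul, hAv k, smul_smul, mul_comm]
  have ha : ∃ k, a k ≠ 0 := by
    by_contra h
    push_neg at h
    exact hx0 (by simp [h])
  obtain ⟨k0, hk0⟩ := ha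
  rw [hAx, dot_expand hv, dot_expand hv, Finset.mul_sum]
  refine Finset.sum_lt_sum (fun k _ => ?_) ⟨k0, Finset.mem_univ _, ?_⟩
  · nlinarith [mul_le_mul_of_nonneg_right (ht k).le (mul_self_nonneg (a k))]
  · nlinarith [mul_lt_mul_of_pos_right (ht k0) (mul_self_pos.mpr hk0)]

lemma basis_onfam {A : Matrix (Fin n) (Fin n) ℝ} (hA : A.IsHermitian) :
    ONFam (fun i => ⇑(hA.eigenvectorBasis i)) := by
  intro k l
  have := (orthonormal_iff_ite.mp hA.eigenvectorBasis.orthonormal) k l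
  simpa [PiLp.inner_apply, RCLike.inner_apply, dotProduct, mul_comm] using this

lemma finrank_span_onfam {ι : Type*} [Fintype ι] [DecidableEq ι] {v : ι → Fin n → ℝ}
    (hv : ONFam v) :
    Module.finrank ℝ (Submodule.span ℝ (Set.range v)) = Fintype.card ι :=
  finrank_span_eq_card hv.linearIndependent

end SVH

namespace SVH

variable {n : ℕ}

/-- there are at most `j` eigenvalues `≥ t` if the `j`-th sorted eigenvalue is `< t`. -/
lemma card_filter_le {A : Matrix (Fin n) (Fin n) ℝ} (hA : A.IsHermitian) {j : ℕ} (hj : j < n)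
    {t : ℝ} (h : sortedEigs A ⟨j, hj⟩ < t) :
    (Finset.univ.filter fun i => t ≤ hA.eigenvalues i).card ≤ j := by
  set σ : Equiv.Perm (Fin n) := (Fin.revPerm).trans (Tuple.sort hA.eigenvalues) with hσ
  have hs : ∀ k : Fin n, sortedEigs A k = hA.eigenvalues (σ k) := fun k => sortedEigs_eq hA k
  have hcard : (Finset.univ.filter fun i => t ≤ hA.eigenvalues i).card
      = (Finset.univ.filter fun k => t ≤ sortedEigs A k).card := by
    refine (Finset.card_nbij (fun k => σ k) (fun k hk => ?_) ?_ ?_).symm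
    · simp only [Finset.mem_coe, Finset.mem_filter, Finset.mem_univ, true_and] at hk ⊢
      rwa [hs] at hk
    · intro a _ b _ hab
      exact σ.injective hab
    · intro i hi
      refine ⟨σ.symm i, ?_, by simp⟩
      simp only [Finset.mem_coe, Finset.mem_filter, Finset.mem_univ, true_and] at hi ⊢
      rwa [hs, Equiv.apply_symm_apply]
  rw [hcard]
  have hsub : (Finset.univ.filter fun k => t ≤ sortedEigs A k)
      ⊆ Finset.univ.filter fun k : Fin n => k.val < j := by
    intro k hk
    simp only [Finset.mem_filter, Finset.mem_univ, true_and] at hk ⊢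
    by_contra hkj
    push_neg at hkj
    have : sortedEigs A k ≤ sortedEigs A ⟨j, hj⟩ :=
      sortedEigs_antitone hA (show (⟨j, hj⟩ : Fin n) ≤ k from hkj)
    linarith
  refine le_trans (Finset.card_le_card hsub) ?_
  have hle : (Finset.univ.filter fun k : Fin n => k.val < j).card ≤ (Finset.range j).card :=
    Finset.card_le_card_of_injOn (fun k => k.val)
      (fun k hk => by
        simp only [Finset.mem_coe, Finset.mem_filter, Finset.mem_univ, true_and] at hk
        simpa using hk)
      (fun a _ b _ hab => Fin.val_injective hab)
  simpa using hle

lemma le_sortedEigs {A : Matrix (Fin n) (Fin n) ℝ} (hA : A.IsHermitian) {j : ℕ} (hj : j < n)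
    {t : ℝ} {v : Fin (j + 1) → Fin n → ℝ} (hv : ONFam v)
    (hR : ∀ x ∈ Submodule.span ℝ (Set.range v), t * (x ⬝ᵥ x) ≤ x ⬝ᵥ (A *ᵥ x)) :
    t ≤ sortedEigs A ⟨j, hj⟩ := by
  by_contra h
  push_neg at h
  classical
  set S : Finset (Fin n) := Finset.univ.filter (fun i => ¬ t ≤ hA.eigenvalues i) with hS
  have hcardS : n - j ≤ S.card := by
    have h1 := Finset.card_filter_add_card_filter_not
      (s := (Finset.univ : Finset (Fin n))) (p := fun i => t ≤ hA.eigenvalues i)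
    have h2 := card_filter_le hA hj h
    rw [hS]
    simp only [Finset.card_univ, Fintype.card_fin] at h1
    omega
  set u : S → Fin n → ℝ := fun i => ⇑(hA.eigenvectorBasis i.1) with hu
  have hON : ONFam u := (basis_onfam hA).comp Subtype.val_injective
  set W := Submodule.span ℝ (Set.range v) with hW
  set U := Submodule.span ℝ (Set.range u) with hU
  have hrW : Module.finrank ℝ W = j + 1 := by
    rw [hW, finrank_span_onfam hv, Fintype.card_fin]
  have hrU : Module.finrank ℝ U = S.card := by
    rw [hU, finrank_span_onfam hON, Fintype.card_coe]
  have hsup : Module.finrank ℝ (W ⊔ U : Submodule ℝ (Fin n → ℝ)) ≤ n := by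
    refine le_trans (Submodule.finrank_le _) ?_
    simp [Module.finrank_fintype_fun_eq_card]
  have hinf : 0 < Module.finrank ℝ (W ⊓ U : Submodule ℝ (Fin n → ℝ)) := by
    have := Submodule.finrank_sup_add_finrank_inf_eq W U
    omega
  have hne : (W ⊓ U : Submodule ℝ (Fin n → ℝ)) ≠ ⊥ := by
    intro hbot
    rw [hbot] at hinf
    simp at hinf
  obtain ⟨x, hx, hx0⟩ := Submodule.exists_mem_ne_zero_of_ne_bot hne
  have h1 : t * (x ⬝ᵥ x) ≤ x ⬝ᵥ (A *ᵥ x) := hR x (hx.1)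
  have h2 : x ⬝ᵥ (A *ᵥ x) < t * (x ⬝ᵥ x) := by
    refine rayleigh_lt hON (fun k => hA.mulVec_eigenvectorBasis k.1) (fun k => ?_) x hx.2 hx0
    have hk := Finset.mem_filter.mp k.2
    exact not_le.mp hk.2
  linarith

/-- top-(j+1) eigen-family witness -/
lemma exists_witness {A : Matrix (Fin n) (Fin n) ℝ} (hA : A.IsHermitian) {j : ℕ} (hj : j < n) :
    ∃ (v : Fin (j + 1) → Fin n → ℝ) (μ : Fin (j + 1) → ℝ), ONFam v ∧
      (∀ k, A *ᵥ v k = μ k • v k) ∧ (∀ k, sortedEigs A ⟨j, hj⟩ ≤ μ k) := by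
  set σ : Equiv.Perm (Fin n) := (Fin.revPerm).trans (Tuple.sort hA.eigenvalues) with hσ
  have hs : ∀ k : Fin n, sortedEigs A k = hA.eigenvalues (σ k) := fun k => sortedEigs_eq hA k
  refine ⟨fun k => ⇑(hA.eigenvectorBasis (σ (Fin.castLE hj k))),
    fun k => hA.eigenvalues (σ (Fin.castLE hj k)), ?_, ?_, ?_⟩
  · exact (basis_onfam hA).comp (σ.injective.comp (Fin.castLE_injective _))
  · exact fun k => hA.mulVec_eigenvectorBasis _
  · intro k
    show sortedEigs A ⟨j, hj⟩ ≤ hA.eigenvalues (σ (Fin.castLE hj k))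
    rw [← hs]
    refine sortedEigs_antitone hA ?_
    show (Fin.castLE hj k : Fin n).val ≤ j
    simpa using Fin.is_le k

end SVH

namespace SVH

variable {n : ℕ}

lemma dot_mulVec_abs_le {M : Matrix (Fin n) (Fin n) ℝ} {δ : ℝ} (hδ : 0 ≤ δ)
    (hd : ∀ i k, |M i k| ≤ δ)
    (x : Fin n → ℝ) : |x ⬝ᵥ (M *ᵥ x)| ≤ n * δ * (x ⬝ᵥ x) := by
  have h1 : |x ⬝ᵥ (M *ᵥ x)| ≤ ∑ i, ∑ k, |x i| * |M i k| * |x k| := by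
    refine le_trans (Finset.abs_sum_le_sum_abs _ _) (Finset.sum_le_sum fun i _ => ?_)
    simp only [Matrix.mulVec, dotProduct]
    rw [Finset.mul_sum]
    refine le_trans (Finset.abs_sum_le_sum_abs _ _) (Finset.sum_le_sum fun k _ => ?_)
    rw [abs_mul, abs_mul]
    ring_nf
    exact le_of_eq (by ring)
  have h2 : ∑ i, ∑ k, |x i| * |M i k| * |x k| ≤ δ * (∑ i, |x i|) ^ 2 := by
    have hstep : ∑ i, ∑ k, |x i| * |M i k| * |x k| ≤ ∑ i : Fin n, ∑ k : Fin n,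
        δ * (|x i| * |x k|) :=
      Finset.sum_le_sum fun i _ => Finset.sum_le_sum fun k _ => by
        have h4 := hd i k
        have h5 := abs_nonneg (x i)
        have h6 := abs_nonneg (x k)
        have h7 := abs_nonneg (M i k)
        nlinarith [mul_le_mul_of_nonneg_left h4 (mul_nonneg h5 h6)]
    refine le_trans hstep (le_of_eq ?_)
    rw [sq, Finset.sum_mul_sum, Finset.mul_sum]
    refine Finset.sum_congr rfl fun i _ => ?_
    rw [Finset.mul_sum]
  have h3 : (∑ i, |x i|) ^ 2 ≤ (n : ℝ) * (x ⬝ᵥ x) := by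
    have hcs := sq_sum_le_card_mul_sum_sq (s := (Finset.univ : Finset (Fin n)))
      (f := fun i => |x i|)
    simp only [Finset.card_univ, Fintype.card_fin, sq_abs] at hcs
    have hxx : x ⬝ᵥ x = ∑ i, x i ^ 2 := by
      simp [dotProduct, sq]
    rw [hxx]
    exact hcs
  calc |x ⬝ᵥ (M *ᵥ x)| ≤ δ * (∑ i, |x i|) ^ 2 := le_trans h1 h2
    _ ≤ δ * ((n : ℝ) * (x ⬝ᵥ x)) := mul_le_mul_of_nonneg_left h3 hδ
    _ = n * δ * (x ⬝ᵥ x) := by ring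

end SVH

namespace SVH

variable {n : ℕ}

lemma weyl_one {A B : Matrix (Fin n) (Fin n) ℝ} (hA : A.IsHermitian) (hB : B.IsHermitian)
    {j : ℕ} (hj : j < n) {δ : ℝ} (hδ : 0 ≤ δ) (hd : ∀ i k, |A i k - B i k| ≤ δ) :
    sortedEigs A ⟨j, hj⟩ ≤ sortedEigs B ⟨j, hj⟩ + n * δ := by
  obtain ⟨v, μ, hv, hAv, hμ⟩ := exists_witness hA hj
  have hR : ∀ x ∈ Submodule.span ℝ (Set.range v),
      (sortedEigs A ⟨j, hj⟩ - n * δ) * (x ⬝ᵥ x) ≤ x ⬝ᵥ (B *ᵥ x) := by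
    intro x hx
    have h1 : sortedEigs A ⟨j, hj⟩ * (x ⬝ᵥ x) ≤ x ⬝ᵥ (A *ᵥ x) :=
      rayleigh_ge hv hAv hμ x hx
    have h2 : |x ⬝ᵥ ((A - B) *ᵥ x)| ≤ n * δ * (x ⬝ᵥ x) :=
      dot_mulVec_abs_le hδ (fun i k => by simpa using hd i k) x
    have h3 : x ⬝ᵥ (B *ᵥ x) = x ⬝ᵥ (A *ᵥ x) - x ⬝ᵥ ((A - B) *ᵥ x) := by
      rw [Matrix.sub_mulVec, dotProduct_sub]
      ring
    have h4 := abs_le.mp h2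
    rw [h3]
    nlinarith [h4.2]
  have := le_sortedEigs hB hj hv hR
  linarith

lemma smul_ge {A : Matrix (Fin n) (Fin n) ℝ} (hA : A.IsHermitian) {j : ℕ} (hj : j < n)
    {a : ℝ} (ha : 0 < a) :
    a * sortedEigs A ⟨j, hj⟩ ≤ sortedEigs (a • A) ⟨j, hj⟩ := by
  have haH : (a • A).IsHermitian := by
    unfold Matrix.IsHermitian at hA ⊢
    rw [Matrix.conjTranspose_smul, hA]
    simp
  obtain ⟨v, μ, hv, hAv, hμ⟩ := exists_witness hA hj
  refine le_sortedEigs haH hj hv ?_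
  have hAv' : ∀ k, (a • A) *ᵥ v k = (a * μ k) • v k := by
    intro k
    rw [Matrix.smul_mulVec, hAv k, smul_smul]
  refine rayleigh_ge hv hAv' (fun k => ?_)
  exact mul_le_mul_of_nonneg_left (hμ k) ha.le

lemma sortedEigs_smul {A : Matrix (Fin n) (Fin n) ℝ} (hA : A.IsHermitian) {j : ℕ} (hj : j < n)
    {a : ℝ} (ha : 0 < a) :
    sortedEigs (a • A) ⟨j, hj⟩ = a * sortedEigs A ⟨j, hj⟩ := by
  have haH : (a • A).IsHermitian := by
    unfold Matrix.IsHermitian at hA ⊢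
    rw [Matrix.conjTranspose_smul, hA]
    simp
  refine le_antisymm ?_ (smul_ge hA hj ha)
  have h2 := smul_ge haH hj (inv_pos.mpr ha)
  rw [smul_smul, inv_mul_cancel₀ ha.ne', one_smul] at h2
  calc sortedEigs (a • A) ⟨j, hj⟩ = a * (a⁻¹ * sortedEigs (a • A) ⟨j, hj⟩) := by
        field_simp
    _ ≤ a * sortedEigs A ⟨j, hj⟩ := mul_le_mul_of_nonneg_left h2 ha.le

lemma sortedEigs_nonneg {A : Matrix (Fin n) (Fin n) ℝ} (hA : A.PosSemidef) (i : Fin n) :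
    0 ≤ sortedEigs A i := by
  rw [sortedEigs_eq hA.1]
  exact hA.eigenvalues_nonneg _

end SVH

namespace SVH

lemma isHermitian_tmul {N K : ℕ} (C : Matrix (Fin N) (Fin K) ℝ) : (Cᵀ * C).IsHermitian := by
  have := Matrix.isHermitian_conjTranspose_mul_self C
  rwa [Matrix.conjTranspose_eq_transpose_of_trivial] at this

lemma posSemidef_mult {N K : ℕ} (C : Matrix (Fin N) (Fin K) ℝ) : (C * Cᵀ).PosSemidef := by
  have := Matrix.posSemidef_self_mul_conjTranspose C
  rwa [Matrix.conjTranspose_eq_transpose_of_trivial] at this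

lemma mulVec_dot_mulVec {N K : ℕ} (C : Matrix (Fin N) (Fin K) ℝ) (x y : Fin K → ℝ) :
    (C *ᵥ x) ⬝ᵥ (C *ᵥ y) = x ⬝ᵥ ((Cᵀ * C) *ᵥ y) := by
  rw [← Matrix.mulVec_mulVec, Matrix.mulVec_transpose, dotProduct_comm,
    Matrix.dotProduct_mulVec, dotProduct_comm]

lemma transfer_le {N K : ℕ} (C : Matrix (Fin N) (Fin K) ℝ) {j : ℕ} (hjK : j < K) (hjN : j < N) :
    sortedEigs (Cᵀ * C) ⟨j, hjK⟩ ≤ sortedEigs (C * Cᵀ) ⟨j, hjN⟩ := by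
  set μ := sortedEigs (Cᵀ * C) ⟨j, hjK⟩ with hμdef
  rcases le_or_gt μ 0 with hμ | hμ
  · exact le_trans hμ (sortedEigs_nonneg (posSemidef_mult C) _)
  obtain ⟨v, μs, hv, hAv, hμs⟩ := exists_witness (isHermitian_tmul C) hjK
  have hμspos : ∀ k, 0 < μs k := fun k => lt_of_lt_of_le hμ (hμs k)
  set w : Fin (j + 1) → Fin N → ℝ := fun k => (Real.sqrt (μs k))⁻¹ • (C *ᵥ v k) with hw
  have hdot : ∀ k l, (C *ᵥ v k) ⬝ᵥ (C *ᵥ v l) = if k = l then μs k else 0 := by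
    intro k l
    rw [mulVec_dot_mulVec, hAv l, dotProduct_smul, hv k l]
    by_cases h : k = l <;> simp [h, smul_eq_mul]
  have hON : ONFam w := by
    intro k l
    rw [hw]
    simp only [smul_dotProduct, dotProduct_smul, hdot k l, smul_eq_mul]
    by_cases h : k = l
    · subst h
      have h1 : Real.sqrt (μs k) ≠ 0 := (Real.sqrt_pos.mpr (hμspos k)).ne'
      simp only [if_pos rfl]
      rw [← mul_assoc]
      field_simp
      rw [Real.sq_sqrt (hμspos k).le, if_pos trivial, if_pos trivial, mul_one]
    · simp [h]
  have hweig : ∀ k, (C * Cᵀ) *ᵥ w k = μs k • w k := by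
    intro k
    rw [hw]
    simp only [Matrix.mulVec_smul]
    rw [Matrix.mulVec_mulVec, Matrix.mul_assoc, ← Matrix.mulVec_mulVec, hAv k,
      Matrix.mulVec_smul, smul_comm]
  have := le_sortedEigs (posSemidef_mult C).1 hjN hON
    (rayleigh_ge hON hweig (fun k => hμs k))
  exact this

lemma transfer_eq {N K : ℕ} (C : Matrix (Fin N) (Fin K) ℝ) {j : ℕ} (hjK : j < K) (hjN : j < N) :
    sortedEigs (C * Cᵀ) ⟨j, hjN⟩ = sortedEigs (Cᵀ * C) ⟨j, hjK⟩ := by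
  refine le_antisymm ?_ (transfer_le C hjK hjN)
  have := transfer_le Cᵀ hjN hjK
  rwa [Matrix.transpose_transpose] at this

end SVH


open SVH

/-- Lemma: the squared singular values of `Σ_k E_k P_k'`, normalized by `N·M(N)`, converge
to the eigenvalues of `Q` with `Q_{r,s} = √(c_r c_s) m_{r,s}`.  The squared singular values
of the `M(N)×N` matrix `A_N` are realized as the decreasingly ordered eigenvalues of
`A_Nᵀ A_N` (which agree with those of `A_N A_Nᵀ` in the range `j < K`). -/
theorem singular_values_limit (K : ℕ) (hK : 0 < K)
    (p : Fin K → ℕ → ℝ) (hp : ∀ r j, p r j ∈ Set.Icc (0:ℝ) 1)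
    (m : Fin K → Fin K → ℝ)
    (hm : ∀ r s, Tendsto (fun N : ℕ => (1 / (N : ℝ)) * ∑ j ∈ Finset.range N, p r j * p s j)
      atTop (nhds (m r s)))
    (Mr : Fin K → ℕ → ℕ) (hMr : ∀ r N, 0 < Mr r N)
    (M : ℕ → ℕ) (hM : ∀ N, M N = ∑ r, Mr r N)
    (c : Fin K → ℝ) (hc : ∀ r, 0 < c r) (hcsum : ∑ r, c r = 1)
    (hcr : ∀ r, Tendsto (fun N : ℕ => (Mr r N : ℝ) / (M N : ℝ)) atTop (nhds (c r)))
    (hMtop : Tendsto M atTop atTop)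
    (A : (N : ℕ) → Matrix (Σ k, Fin (Mr k N)) (Fin N) ℝ)
    (hA : ∀ N (i : Σ k, Fin (Mr k N)) (j : Fin N), A N i j = p i.1 (j : ℕ))
    (Q : Matrix (Fin K) (Fin K) ℝ)
    (hQ : ∀ r s, Q r s = Real.sqrt (c r * c s) * m r s) :
    ∀ j : ℕ, j < K →
      Tendsto (fun N : ℕ => nthEig ((A N)ᵀ * A N) j / ((N : ℝ) * (M N : ℝ)))
        atTop (nhds (nthEig Q j)) := by
  intro j hjK
  have hFinK : Nonempty (Fin K) := ⟨⟨0, hK⟩⟩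
  have hMpos : ∀ N, 0 < M N := by
    intro N
    rw [hM N]
    exact Finset.sum_pos (fun r _ => hMr r N) Finset.univ_nonempty
  set C : (N : ℕ) → Matrix (Fin N) (Fin K) ℝ :=
    fun N => Matrix.of fun i r => Real.sqrt (Mr r N) * p r (i : ℕ) with hC
  set B : (N : ℕ) → Matrix (Fin K) (Fin K) ℝ :=
    fun N => (((N : ℝ) * (M N : ℝ))⁻¹) • ((C N)ᵀ * (C N)) with hB
  -- symmetry of m and Q hermitian
  have hmsymm : ∀ r s, m r s = m s r := fun r s =>
    tendsto_nhds_unique (hm r s) (by simpa [mul_comm] using hm s r)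
  have hQH : Q.IsHermitian := by
    rw [Matrix.IsHermitian, Matrix.conjTranspose_eq_transpose_of_trivial]
    ext r s
    rw [Matrix.transpose_apply, hQ s r, hQ r s, hmsymm r s, mul_comm (c s) (c r)]
  have hBH : ∀ N, (B N).IsHermitian := by
    intro N
    rw [hB]
    have h1 := isHermitian_tmul (C N)
    rw [Matrix.IsHermitian] at h1 ⊢
    rw [Matrix.conjTranspose_smul, h1]
    simp
  -- entrywise limit of B
  have hBQ : ∀ r s, Tendsto (fun N => B N r s) atTop (nhds (Q r s)) := by
    intro r s
    have hform : ∀ᶠ N : ℕ in atTop, B N r s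
        = Real.sqrt ((Mr r N : ℝ) / (M N : ℝ)) * Real.sqrt ((Mr s N : ℝ) / (M N : ℝ))
          * ((1 / (N : ℝ)) * ∑ jj ∈ Finset.range N, p r jj * p s jj) := by
      filter_upwards [eventually_ge_atTop 1] with N hN
      have hNpos : (0:ℝ) < (N:ℝ) := by exact_mod_cast hN
      have hMp : (0:ℝ) < (M N : ℝ) := by exact_mod_cast hMpos N
      have hsum : ((C N)ᵀ * C N) r s
          = Real.sqrt (Mr r N) * Real.sqrt (Mr s N) * ∑ jj ∈ Finset.range N, p r jj * p s jj := by
        rw [Matrix.mul_apply]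
        rw [← Fin.sum_univ_eq_sum_range (fun jj => p r jj * p s jj) N]
        rw [Finset.mul_sum]
        refine Finset.sum_congr rfl fun i _ => ?_
        show (C N)ᵀ r i * C N i s = _
        rw [Matrix.transpose_apply]
        show (Real.sqrt (Mr r N) * p r (i:ℕ)) * (Real.sqrt (Mr s N) * p s (i:ℕ)) = _
        ring
      have hsqrt : ∀ a : ℕ, Real.sqrt ((a : ℝ) / (M N : ℝ))
          = Real.sqrt a / Real.sqrt (M N) := fun a => Real.sqrt_div (Nat.cast_nonneg a) _
      have hBapp : B N r s = ((N : ℝ) * (M N : ℝ))⁻¹ * (((C N)ᵀ * C N) r s) := by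
        rw [hB]
        simp [Matrix.smul_apply]
      rw [hBapp, hsum, hsqrt, hsqrt]
      set u := Real.sqrt ((M N : ℝ)) with hu
      have hu2 : u * u = (M N : ℝ) := Real.mul_self_sqrt hMp.le
      have hu0 : u ≠ 0 := by rw [hu]; positivity
      rw [← hu2]
      field_simp
    refine Tendsto.congr' (EventuallyEq.symm hform) ?_
    have h1 := (((hcr r).sqrt).mul ((hcr s).sqrt)).mul (hm r s)
    rw [hQ r s, Real.sqrt_mul (hc r).le]
    exact h1
  -- total entrywise error
  set D : ℕ → ℝ := fun N => ∑ r, ∑ s, |B N r s - Q r s| with hD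
  have hDnn : ∀ N, 0 ≤ D N := fun N =>
    Finset.sum_nonneg fun r _ => Finset.sum_nonneg fun s _ => abs_nonneg _
  have hD0 : Tendsto D atTop (nhds 0) := by
    rw [hD]
    have : ∀ r s : Fin K, Tendsto (fun N => |B N r s - Q r s|) atTop (nhds 0) := by
      intro r s
      have h1 := (hBQ r s).sub (tendsto_const_nhds (x := Q r s))
      rw [sub_self] at h1
      simpa using h1.abs
    have h2 : Tendsto (fun N => ∑ r : Fin K, ∑ s : Fin K, |B N r s - Q r s|) atTop
        (nhds (∑ r : Fin K, ∑ s : Fin K, (0:ℝ))) :=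
      tendsto_finset_sum _ fun r _ => tendsto_finset_sum _ fun s _ => this r s
    simpa using h2
  have hentry : ∀ N (r s : Fin K), |B N r s - Q r s| ≤ D N := by
    intro N r s
    rw [hD]
    calc |B N r s - Q r s| ≤ ∑ s', |B N r s' - Q r s'| :=
          Finset.single_le_sum (f := fun s' => |B N r s' - Q r s'|)
            (fun s' _ => abs_nonneg _) (Finset.mem_univ s)
      _ ≤ ∑ r', ∑ s', |B N r' s' - Q r' s'| :=
          Finset.single_le_sum (f := fun r' => ∑ s', |B N r' s' - Q r' s'|)
            (fun r' _ => Finset.sum_nonneg fun s' _ => abs_nonneg _) (Finset.mem_univ r)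
  -- eigenvalue convergence for B → Q
  have hdiff : ∀ N, |sortedEigs (B N) ⟨j, hjK⟩ - sortedEigs Q ⟨j, hjK⟩| ≤ K * D N := by
    intro N
    rw [abs_sub_le_iff]
    constructor
    · have := weyl_one (hBH N) hQH hjK (hDnn N) (fun r s => hentry N r s)
      linarith
    · have := weyl_one hQH (hBH N) hjK (hDnn N) (fun r s => by
        rw [abs_sub_comm]; exact hentry N r s)
      linarith
  have hKD0 : Tendsto (fun N => (K:ℝ) * D N) atTop (nhds 0) := by
    have := hD0.const_mul (K:ℝ)
    simpa using this
  have key0 : Tendsto (fun N => sortedEigs (B N) ⟨j, hjK⟩ - sortedEigs Q ⟨j, hjK⟩) atTop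
      (nhds 0) := squeeze_zero_norm hdiff hKD0
  have key : Tendsto (fun N => sortedEigs (B N) ⟨j, hjK⟩) atTop
      (nhds (sortedEigs Q ⟨j, hjK⟩)) := by
    have := key0.add (tendsto_const_nhds (x := sortedEigs Q ⟨j, hjK⟩))
    simpa using this
  -- identify the normalized eigenvalues of AᵀA with those of B
  have heq : ∀ᶠ N : ℕ in atTop, sortedEigs (B N) ⟨j, hjK⟩
      = nthEig ((A N)ᵀ * A N) j / ((N : ℝ) * (M N : ℝ)) := by
    filter_upwards [eventually_ge_atTop (j + 1)] with N hN
    have hjN : j < N := hN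
    have hNpos : (0:ℝ) < (N:ℝ) := by
      have : 0 < N := lt_of_lt_of_le (Nat.succ_pos j) hN
      exact_mod_cast this
    have hMp : (0:ℝ) < (M N : ℝ) := by exact_mod_cast hMpos N
    have hpos : (0:ℝ) < (N : ℝ) * (M N : ℝ) := mul_pos hNpos hMp
    have hAC : (A N)ᵀ * A N = C N * (C N)ᵀ := by
      ext j1 j2
      rw [Matrix.mul_apply, Matrix.mul_apply]
      have hL : ∑ i : (Σ k, Fin (Mr k N)), (A N)ᵀ j1 i * A N i j2
          = ∑ k : Fin K, (Mr k N : ℝ) * (p k (j1:ℕ) * p k (j2:ℕ)) := by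
        rw [← Finset.univ_sigma_univ, Finset.sum_sigma]
        refine Finset.sum_congr rfl fun k _ => ?_
        have : ∀ i2 : Fin (Mr k N), (A N)ᵀ j1 ⟨k, i2⟩ * A N ⟨k, i2⟩ j2
            = p k (j1:ℕ) * p k (j2:ℕ) := by
          intro i2
          rw [Matrix.transpose_apply, hA N ⟨k, i2⟩ j1, hA N ⟨k, i2⟩ j2]
        rw [Finset.sum_congr rfl fun i2 _ => this i2]
        simp [Finset.sum_const, nsmul_eq_mul]
      rw [hL]
      refine Finset.sum_congr rfl fun k _ => ?_
      show (Mr k N : ℝ) * (p k (j1:ℕ) * p k (j2:ℕ))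
          = C N j1 k * (C N)ᵀ k j2
      rw [Matrix.transpose_apply]
      show _ = (Real.sqrt (Mr k N) * p k (j1:ℕ)) * (Real.sqrt (Mr k N) * p k (j2:ℕ))
      have h5 := Real.mul_self_sqrt (Nat.cast_nonneg (Mr k N) : (0:ℝ) ≤ (Mr k N : ℝ))
      calc (Mr k N : ℝ) * (p k (j1:ℕ) * p k (j2:ℕ))
          = (Real.sqrt (Mr k N) * Real.sqrt (Mr k N)) * (p k (j1:ℕ) * p k (j2:ℕ)) := by
            rw [h5]
        _ = (Real.sqrt (Mr k N) * p k (j1:ℕ)) * (Real.sqrt (Mr k N) * p k (j2:ℕ)) := by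
            ring
    have h1 : nthEig ((A N)ᵀ * A N) j = sortedEigs ((A N)ᵀ * A N) ⟨j, hjN⟩ := dif_pos hjN
    have h2 : sortedEigs ((A N)ᵀ * A N) ⟨j, hjN⟩ = sortedEigs ((C N)ᵀ * C N) ⟨j, hjK⟩ := by
      rw [hAC]
      exact transfer_eq (C N) hjK hjN
    have h3 : sortedEigs (B N) ⟨j, hjK⟩
        = ((N : ℝ) * (M N : ℝ))⁻¹ * sortedEigs ((C N)ᵀ * C N) ⟨j, hjK⟩ := by
      rw [hB]
      exact sortedEigs_smul (isHermitian_tmul (C N)) hjK (inv_pos.mpr hpos)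
    rw [h1, h2, div_eq_inv_mul, ← h3]
  have hfin : nthEig Q j = sortedEigs Q ⟨j, hjK⟩ := dif_pos hjK
  rw [hfin]
  exact Tendsto.congr' heq key
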